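/- Let ξ₁, …, ξ_N be distinct positive real numbers and let Ξ be the N×N diagonal matrix with entries ξ_i. Then for any distinct natural numbers k₁, …, k_N, the matrices Ξ^{k₁}, …, Ξ^{k_N} are linearly independent in the space of N×N matrices. -/

import Mathlib

open Finset

/-- Descartes-style lemma: a real "sparse polynomial" with `n` monomials
vanishing at `n` distinct positive points has all coefficients zero. -/
lemma sparse_poly_zero : ∀ (n : ℕ) (s : Finset ℕ), s.card = n →
    ∀ (c : ℕ → ℝ) (x : Fin n → ℝ), StrictMono x → (∀ i, 0 < x i) →
    (∀ i, ∑ e ∈ s, c e * x i ^ e = 0) → ∀ e ∈ s, c e = 0 := by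
  intro n
  induction n with
  | zero =>
    intro s hs c x _ _ _ e he
    rw [Finset.card_eq_zero] at hs
    simp [hs] at he
  | succ n ih =>
    intro s hs c x hx hxpos hroot
    have hsne : s.Nonempty := Finset.card_pos.mp (by omega)
    set m := s.min' hsne with hm
    have hmem : m ∈ s := s.min'_mem hsne
    have hle : ∀ e ∈ s, m ≤ e := fun e he => s.min'_le e he
    set g : ℝ → ℝ := fun t => ∑ e ∈ s, c e * t ^ (e - m) with hgdef
    have hgroot : ∀ i, g (x i) = 0 := by
      intro i
      have hx0 : (x i) ^ m ≠ 0 := pow_ne_zero _ (ne_of_gt (hxpos i))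
      have key : (x i) ^ m * g (x i) = ∑ e ∈ s, c e * x i ^ e := by
        rw [hgdef, Finset.mul_sum]
        refine Finset.sum_congr rfl fun e he => ?_
        rw [← mul_assoc, mul_comm ((x i) ^ m), mul_assoc, ← pow_add]
        congr 2
        have := hle e he; omega
      have h0 : (x i) ^ m * g (x i) = 0 := by rw [key, hroot i]
      exact (mul_eq_zero.mp h0).resolve_left hx0
    set g' : ℝ → ℝ := fun t => ∑ e ∈ s, c e * ((e - m : ℕ) * t ^ (e - m - 1)) with hg'def
    have hderiv : ∀ t : ℝ, HasDerivAt g (g' t) t := by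
      intro t
      exact HasDerivAt.fun_sum fun e _ => (hasDerivAt_pow (e - m) t).const_mul (c e)
    have hgcont : Continuous g :=
      continuous_iff_continuousAt.mpr fun t => (hderiv t).continuousAt
    have hy : ∀ i : Fin n, ∃ y, x i.castSucc < y ∧ y < x i.succ ∧ g' y = 0 := by
      intro i
      have hlt : x i.castSucc < x i.succ := hx (Fin.castSucc_lt_succ (i := i))
      obtain ⟨y, hy1, hy2⟩ := exists_hasDerivAt_eq_zero hlt hgcont.continuousOn
        (by rw [hgroot, hgroot]) (fun z _ => hderiv z)
      exact ⟨y, hy1.1, hy1.2, hy2⟩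
    choose y hy1 hy2 hy3 using hy
    have hymono : StrictMono y := by
      intro i j hij
      calc y i < x i.succ := hy2 i
        _ ≤ x j.castSucc := hx.monotone (by
          rw [Fin.succ_le_castSucc_iff]; exact hij)
        _ < y j := hy1 j
    have hypos : ∀ i, 0 < y i := fun i => (hxpos i.castSucc).trans (hy1 i)
    -- new finset and coefficients
    set s' : Finset ℕ := (s.erase m).image (fun e => e - (m + 1)) with hs'def
    have hinj : Set.InjOn (fun e => e - (m + 1)) (s.erase m) := by
      intro a ha b hb hab
      have ha' : m < a := lt_of_le_of_ne (hle a (Finset.mem_of_mem_erase ha))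
        (Ne.symm (Finset.ne_of_mem_erase ha))
      have hb' : m < b := lt_of_le_of_ne (hle b (Finset.mem_of_mem_erase hb))
        (Ne.symm (Finset.ne_of_mem_erase hb))
      simp only at hab; omega
    have hcard' : s'.card = n := by
      rw [hs'def, Finset.card_image_of_injOn hinj, Finset.card_erase_of_mem hmem, hs]
      omega
    set c' : ℕ → ℝ := fun e => c (e + (m + 1)) * ((e : ℝ) + 1) with hc'def
    have hsum : ∀ t : ℝ, ∑ e ∈ s', c' e * t ^ e = g' t := by
      intro t
      rw [hs'def, Finset.sum_image hinj]
      show _ = ∑ e ∈ s, c e * ((e - m : ℕ) * t ^ (e - m - 1))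
      rw [← Finset.add_sum_erase s _ hmem]
      simp only [Nat.sub_self, Nat.cast_zero, zero_mul, mul_zero, zero_add]
      refine Finset.sum_congr rfl fun e he => ?_
      have he' : m < e := lt_of_le_of_ne (hle e (Finset.mem_of_mem_erase he))
        (Ne.symm (Finset.ne_of_mem_erase he))
      have h1 : e - (m + 1) + (m + 1) = e := by omega
      have h2 : ((e - (m + 1) : ℕ) : ℝ) + 1 = ((e - m : ℕ) : ℝ) := by
        push_cast [Nat.cast_sub (by omega : m + 1 ≤ e), Nat.cast_sub (le_of_lt he')]
        ring
      have h3 : e - (m + 1) = e - m - 1 := by omega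
      have hc'e : c' (e - (m + 1)) = c e * ((e - m : ℕ) : ℝ) := by
        rw [hc'def]; simp only; rw [h1, h2]
      rw [hc'e, h3]; ring
    have hroots' : ∀ i : Fin n, ∑ e ∈ s', c' e * y i ^ e = 0 := fun i =>
      (hsum (y i)).trans (hy3 i)
    have hzero' : ∀ e ∈ s', c' e = 0 := ih s' hcard' c' y hymono hypos hroots'
    have herase : ∀ e ∈ s.erase m, c e = 0 := by
      intro e he
      have he' : m < e := lt_of_le_of_ne (hle e (Finset.mem_of_mem_erase he))
        (Ne.symm (Finset.ne_of_mem_erase he))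
      have hmem' : e - (m + 1) ∈ s' := Finset.mem_image_of_mem _ he
      have := hzero' _ hmem'
      rw [hc'def] at this
      simp only at this
      have h1 : e - (m + 1) + (m + 1) = e := by omega
      rw [h1] at this
      have hne : ((e - (m + 1) : ℕ) : ℝ) + 1 ≠ 0 := by positivity
      exact (mul_eq_zero.mp this).resolve_right hne
    intro e he
    rcases eq_or_ne e m with rfl | hne
    · -- use the root at index 0 : Fin (n+1)
      have h0 := hroot 0
      rw [← Finset.add_sum_erase s _ hmem] at h0
      rw [Finset.sum_eq_zero (fun e' he' => by rw [herase e' he', zero_mul]),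
        add_zero] at h0
      exact (mul_eq_zero.mp h0).resolve_right (pow_ne_zero _ (ne_of_gt (hxpos 0)))
    · exact herase e (Finset.mem_erase.mpr ⟨hne, he⟩)

/-- For Ξ = diag(ξ₁,…,ξ_N) with distinct positive real entries and distinct
natural numbers k₁,…,k_N, the matrix powers Ξ^{kⱼ} are linearly independent. -/
theorem diagonal_powers_linearIndependent (N : ℕ) (ξ : Fin N → ℝ) (k : Fin N → ℕ)
    (hpos : ∀ i, 0 < ξ i) (hdist : Function.Injective ξ)
    (hk : Function.Injective k) :
    LinearIndependent ℝ (fun j : Fin N => (Matrix.diagonal ξ) ^ (k j)) := by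
  classical
  rw [Fintype.linearIndependent_iff]
  intro c hc j
  -- entrywise equations
  have hent : ∀ i : Fin N, ∑ j : Fin N, c j * ξ i ^ (k j) = 0 := by
    intro i
    have := congrFun (congrFun hc i) i
    simpa [Matrix.diagonal_pow, Matrix.sum_apply, Matrix.diagonal_apply_eq] using this
  -- coefficient function on ℕ
  set cc : ℕ → ℝ := fun e => if h : ∃ j, k j = e then c h.choose else 0 with hccdef
  have hcc : ∀ j, cc (k j) = c j := by
    intro j
    have h : ∃ j', k j' = k j := ⟨j, rfl⟩
    rw [hccdef]
    simp only [dif_pos h]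
    exact congrArg c (hk h.choose_spec)
  set s : Finset ℕ := Finset.image k Finset.univ with hsdef
  have hscard : s.card = N := by
    rw [hsdef, Finset.card_image_of_injective _ hk, Finset.card_univ, Fintype.card_fin]
  set S : Finset ℝ := Finset.image ξ Finset.univ with hSdef
  have hScard : S.card = N := by
    rw [hSdef, Finset.card_image_of_injective _ hdist, Finset.card_univ, Fintype.card_fin]
  set x : Fin N → ℝ := fun i => (S.orderIsoOfFin hScard i : ℝ) with hxdef
  have hxmono : StrictMono x := fun i j hij =>
    Subtype.coe_lt_coe.mpr ((S.orderIsoOfFin hScard).strictMono hij)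
  have hxmem : ∀ i, ∃ i₀, ξ i₀ = x i := by
    intro i
    have : x i ∈ S := (S.orderIsoOfFin hScard i).2
    rw [hSdef, Finset.mem_image] at this
    obtain ⟨i₀, _, h⟩ := this
    exact ⟨i₀, h⟩
  have hxpos : ∀ i, 0 < x i := by
    intro i
    obtain ⟨i₀, h⟩ := hxmem i
    rw [← h]; exact hpos i₀
  have hroots : ∀ i, ∑ e ∈ s, cc e * x i ^ e = 0 := by
    intro i
    obtain ⟨i₀, h⟩ := hxmem i
    rw [hsdef, Finset.sum_image (fun a _ b _ hab => hk hab)]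
    rw [← h, ← hent i₀]
    exact Finset.sum_congr rfl fun j _ => by rw [hcc]
  have := sparse_poly_zero N s hscard cc x hxmono hxpos hroots (k j)
    (by rw [hsdef]; exact Finset.mem_image_of_mem _ (Finset.mem_univ j))
  rw [hcc] at this
  exact this
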